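/- Let $\Delta_{i,j} \subset \mathbb{R}^m$ be convex polyhedra, all with the same support cone, for $i = 1, \ldots, n$ and $j = 1, \ldots, p$. For each $j$, let $\Delta_{1,j} * \cdots * \Delta_{n,j} \subset \mathbb{R}^{n-1} \oplus \mathbb{R}^m$ denote the prism: the convex hull of $\bigcup_{i=1}^n \{b_i\} \times \Delta_{i,j}$ where $b_1, \ldots, b_n$ are the vertices of the standard simplex in $\mathbb{R}^{n-1}$ (say $b_1 = 0$, $b_i = e_{i-1}$). Then for every $n$-tuple of non-negative integers $a_1, \ldots, a_n$ with $a_1 + \cdots + a_n = p$, the slice of the Minkowski sum of the prisms by the plane $\{(a_1,\ldots,a_{n-1})\} \times \mathbb{R}^m$ satisfies: $\big(\{(a_1,\ldots,a_{n-1})\}\times\mathbb{R}^m\big) \cap \big(\sum_{j=1}^p \Delta_{1,j}*\cdots*\Delta_{n,j}\big) = \{(a_1,\ldots,a_{n-1})\} \times \mathrm{conv}\Big(\bigcup_{J_1 \sqcup \cdots \sqcup J_n = \{1,\ldots,p\},\ |J_i| = a_i} \sum_{i=1}^n \sum_{j \in J_i} \Delta_{i,j}\Big)$. -/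

import Mathlib

open Pointwise

def dot {m : ℕ} (γ x : Fin m → ℝ) : ℝ := ∑ j, γ j * x j

/-- A (possibly unbounded) convex polyhedron. -/
def IsPolyhedron {m : ℕ} (N : Set (Fin m → ℝ)) : Prop :=
  ∃ (k : ℕ) (f : Fin k → (Fin m → ℝ)) (c : Fin k → ℝ), N = {x | ∀ i, c i ≤ dot (f i) x}

def supportCone {m : ℕ} (N : Set (Fin m → ℝ)) : Set (Fin m → ℝ) :=
  {γ | BddBelow ((fun x => dot γ x) '' N)}

/-- The vertices `b₁ = 0, b₂ = e₁, …, bₙ = e_{n-1}` of the standard simplex in `ℝ^{n-1}`. -/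
def simpVert (n' : ℕ) : Fin (n' + 1) → (Fin n' → ℝ) :=
  Fin.cases 0 (fun j => Pi.single j (1 : ℝ))

/-- The prism `Δ₁ * ⋯ * Δₙ = conv(⋃ᵢ {bᵢ} × Δᵢ) ⊆ ℝ^{n-1} ⊕ ℝ^m`. -/
def prism {n' m : ℕ} (Δ : Fin (n' + 1) → Set (Fin m → ℝ)) :
    Set ((Fin n' → ℝ) × (Fin m → ℝ)) :=
  convexHull ℝ (⋃ i, ({simpVert n' i} : Set (Fin n' → ℝ)) ×ˢ Δ i)


section AuxLemmas

variable {E : Type*} [AddCommGroup E] [Module ℝ E]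

lemma convex_finsetSum {ι : Type*} (s : Finset ι) (f : ι → Set E)
    (h : ∀ i ∈ s, Convex ℝ (f i)) : Convex ℝ (∑ i ∈ s, f i) := by
  classical
  refine Finset.sum_induction f (Convex ℝ) (fun a b ha hb => ha.add hb) ?_ h
  exact (convex_singleton (0 : E) : Convex ℝ ({0} : Set E))

lemma mem_convexHull_iUnion_iff {n : ℕ} (A : Fin (n + 1) → Set E)
    (hA : ∀ i, Convex ℝ (A i)) (hne : ∀ i, (A i).Nonempty) (q : E) :
    q ∈ convexHull ℝ (⋃ i, A i) ↔
      ∃ (t : Fin (n + 1) → ℝ) (z : Fin (n + 1) → E),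
        (∀ i, 0 ≤ t i) ∧ ∑ i, t i = 1 ∧ (∀ i, z i ∈ A i) ∧ ∑ i, t i • z i = q := by
  classical
  constructor
  · intro hq
    rw [convexHull_eq] at hq
    obtain ⟨ι, s, w, f, hw0, hw1, hfs, hq⟩ := hq
    rw [Finset.centerMass_eq_of_sum_1 _ _ hw1] at hq
    have hex : ∀ k, ∃ i, k ∈ s → f k ∈ A i := by
      intro k
      by_cases hk : k ∈ s
      · obtain ⟨i, hi⟩ := Set.mem_iUnion.1 (hfs k hk)
        exact ⟨i, fun _ => hi⟩
      · exact ⟨0, fun h => absurd h hk⟩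
    choose c hc using hex
    set t : Fin (n + 1) → ℝ := fun i => ∑ k ∈ s.filter (fun k => c k = i), w k with htdef
    set S : Fin (n + 1) → E := fun i => ∑ k ∈ s.filter (fun k => c k = i), w k • f k with hSdef
    have ht0 : ∀ i, 0 ≤ t i := fun i =>
      Finset.sum_nonneg fun k hk => hw0 k (Finset.mem_filter.1 hk).1
    have hSzero : ∀ i, t i = 0 → S i = 0 := by
      intro i h
      refine Finset.sum_eq_zero fun k hk => ?_
      have hw := (Finset.sum_eq_zero_iff_of_nonneg
        (fun k hk => hw0 k (Finset.mem_filter.1 hk).1)).1 h k hk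
      rw [hw, zero_smul]
    have htS : ∀ i, t i • (if h : t i = 0 then (hne i).some else (t i)⁻¹ • S i) = S i := by
      intro i
      by_cases h : t i = 0
      · rw [dif_pos h, h, zero_smul, (hSzero i h).symm]
      · rw [dif_neg h, smul_inv_smul₀ h]
    refine ⟨t, fun i => if h : t i = 0 then (hne i).some else (t i)⁻¹ • S i, ht0, ?_, ?_, ?_⟩
    · rw [htdef]
      exact (Finset.sum_fiberwise_of_maps_to (fun k _ => Finset.mem_univ (c k)) w).trans hw1
    · intro i
      dsimp only
      by_cases h : t i = 0
      · rw [dif_pos h]; exact (hne i).some_mem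
      · rw [dif_neg h]
        have hpos : 0 < ∑ k ∈ s.filter (fun k => c k = i), w k :=
          lt_of_le_of_ne (ht0 i) (Ne.symm h)
        have hmem : ∀ k ∈ s.filter (fun k => c k = i), f k ∈ A i := by
          intro k hk
          have h1 := (Finset.mem_filter.1 hk).1
          have h2 := (Finset.mem_filter.1 hk).2
          have := hc k h1
          rwa [h2] at this
        have := (hA i).centerMass_mem
          (fun k hk => hw0 k (Finset.mem_filter.1 hk).1) hpos hmem
        rwa [Finset.centerMass] at this
    · calc ∑ i, t i • (if h : t i = 0 then (hne i).some else (t i)⁻¹ • S i)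
          = ∑ i, S i := Finset.sum_congr rfl fun i _ => htS i
        _ = ∑ k ∈ s, w k • f k :=
            Finset.sum_fiberwise_of_maps_to (fun k _ => Finset.mem_univ (c k)) _
        _ = q := hq
  · rintro ⟨t, z, h0, h1, hz, rfl⟩
    exact (convex_convexHull ℝ _).sum_mem (fun i _ => h0 i) h1
      (fun i _ => subset_convexHull ℝ _ (Set.mem_iUnion.2 ⟨i, hz i⟩))

end AuxLemmas

lemma mem_prism_iff {n' m : ℕ} (Δ : Fin (n' + 1) → Set (Fin m → ℝ))
    (hconv : ∀ i, Convex ℝ (Δ i)) (hne : ∀ i, (Δ i).Nonempty)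
    (q : (Fin n' → ℝ) × (Fin m → ℝ)) :
    q ∈ prism Δ ↔
      ∃ (t : Fin (n' + 1) → ℝ) (z : Fin (n' + 1) → (Fin m → ℝ)),
        (∀ i, 0 ≤ t i) ∧ ∑ i, t i = 1 ∧ (∀ i, z i ∈ Δ i) ∧
          (∑ i, t i • simpVert n' i) = q.1 ∧ (∑ i, t i • z i) = q.2 := by
  rw [prism, mem_convexHull_iUnion_iff
    (fun i => ({simpVert n' i} : Set (Fin n' → ℝ)) ×ˢ Δ i)
    (fun i => (convex_singleton _).prod (hconv i))
    (fun i => ⟨(simpVert n' i, (hne i).some), Set.mk_mem_prod rfl (hne i).some_mem⟩)]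
  constructor
  · rintro ⟨t, zz, h0, h1, hzz, hsum⟩
    have hb : ∀ i, (zz i).1 = simpVert n' i := fun i => (Set.mem_prod.1 (hzz i)).1
    refine ⟨t, fun i => (zz i).2, h0, h1, fun i => (Set.mem_prod.1 (hzz i)).2, ?_, ?_⟩
    · rw [← hsum, Prod.fst_sum]
      exact Finset.sum_congr rfl fun i _ => by rw [Prod.smul_fst, hb i]
    · rw [← hsum, Prod.snd_sum]
      exact Finset.sum_congr rfl fun i _ => by rw [Prod.smul_snd]
  · rintro ⟨t, z, h0, h1, hz, hfst, hsnd⟩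
    refine ⟨t, fun i => (simpVert n' i, z i), h0, h1,
      fun i => Set.mk_mem_prod rfl (hz i), ?_⟩
    refine Prod.ext ?_ ?_
    · rw [Prod.fst_sum, ← hfst]
      exact Finset.sum_congr rfl fun i _ => by rw [Prod.smul_fst]
    · rw [Prod.snd_sum, ← hsnd]
      exact Finset.sum_congr rfl fun i _ => by rw [Prod.smul_snd]

lemma sum_smul_simpVert_apply {n' : ℕ} (c : Fin (n' + 1) → ℝ) (k : Fin n') :
    (∑ i, c i • simpVert n' i) k = c k.succ := by
  rw [Finset.sum_apply, Fin.sum_univ_succ]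
  simp [simpVert, Pi.single_apply, mul_ite, Finset.sum_ite_eq']

lemma transport {n p : ℕ} (t : Fin p → Fin n → ℝ) (a : Fin n → ℕ) (ha : ∑ i, a i = p)
    (ht0 : ∀ j i, 0 ≤ t j i) (hcol : ∀ j, ∑ i, t j i = 1)
    (hrow : ∀ i, ∑ j, t j i = (a i : ℝ)) :
    ∃ (w : Equiv.Perm ((i : Fin n) × Fin (a i)) → ℝ)
      (J : Equiv.Perm ((i : Fin n) × Fin (a i)) → Fin n → Finset (Fin p)),
      (∀ k, 0 ≤ w k) ∧ ∑ k, w k = 1 ∧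
      (∀ k, (Pairwise fun i i' => Disjoint (J k i) (J k i')) ∧
        (∀ j, ∃ i, j ∈ J k i) ∧ (∀ i, (J k i).card = a i)) ∧
      (∀ i j, t j i = ∑ k, w k * (if j ∈ J k i then 1 else 0)) := by
  classical
  have hTzero : ∀ i, a i = 0 → ∀ j, t j i = 0 := by
    intro i hi j
    have h := hrow i
    rw [hi, Nat.cast_zero] at h
    exact (Finset.sum_eq_zero_iff_of_nonneg (fun j _ => ht0 j i)).1 h j (Finset.mem_univ j)
  have hcard : Fintype.card ((i : Fin n) × Fin (a i)) = p := by
    simp [ha]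
  let e : ((i : Fin n) × Fin (a i)) ≃ Fin p := Fintype.equivFinOfCardEq hcard
  set M : Matrix ((i : Fin n) × Fin (a i)) ((i : Fin n) × Fin (a i)) ℝ :=
    fun s r => t (e r) s.1 / (a s.1 : ℝ) with hMdef
  have hMds : M ∈ doublyStochastic ℝ _ := by
    rw [mem_doublyStochastic_iff_sum]
    refine ⟨fun s r => div_nonneg (ht0 _ _) (Nat.cast_nonneg _), ?_, ?_⟩
    · intro s
      have hpos : (0:ℝ) < (a s.1 : ℝ) := by exact_mod_cast s.2.pos
      simp only [hMdef]
      rw [← Finset.sum_div, Equiv.sum_comp e (fun j => t j s.1), hrow, div_self hpos.ne']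
    · intro r
      simp only [hMdef]
      rw [← Finset.univ_sigma_univ, Finset.sum_sigma]
      have hterm : ∀ i : Fin n, ∑ _k : Fin (a i), t (e r) i / (a i : ℝ) = t (e r) i := by
        intro i
        rcases Nat.eq_zero_or_pos (a i) with h | h
        · simp [h, hTzero i h]
        · have hne : ((a i : ℕ) : ℝ) ≠ 0 := Nat.cast_ne_zero.2 h.ne'
          rw [Finset.sum_const, Finset.card_univ, Fintype.card_fin, nsmul_eq_mul,
            mul_comm, div_mul_cancel₀ _ hne]
      exact (Finset.sum_congr rfl fun i _ => hterm i).trans (hcol (e r))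
  obtain ⟨w, hw0, hw1, hweq⟩ := exists_eq_sum_perm_of_mem_doublyStochastic hMds
  have hperm : ∀ (σ : Equiv.Perm ((i : Fin n) × Fin (a i))) s r,
      σ.permMatrix ℝ s r = if σ s = r then 1 else 0 := by
    intro σ s r
    simp [Equiv.Perm.permMatrix, PEquiv.toMatrix_apply, Equiv.toPEquiv_apply, Option.mem_def]
  have hMentry : ∀ s r, M s r = ∑ σ, w σ * (if σ s = r then 1 else 0) := by
    intro s r
    rw [← hweq]
    simp [Matrix.sum_apply, Matrix.smul_apply, smul_eq_mul, hperm, Equiv.toPEquiv_apply]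
  have hJmem : ∀ (σ : Equiv.Perm ((i : Fin n) × Fin (a i))) (i : Fin n) (j : Fin p),
      (j ∈ Finset.univ.image fun k : Fin (a i) => e (σ ⟨i, k⟩)) ↔
        (σ.symm (e.symm j)).1 = i := by
    intro σ i j
    simp only [Finset.mem_image, Finset.mem_univ, true_and]
    constructor
    · rintro ⟨k, rfl⟩; simp
    · intro h
      rcases hs : σ.symm (e.symm j) with ⟨i', k⟩
      rw [hs] at h
      dsimp at h
      subst h
      exact ⟨k, by rw [← hs]; simp⟩
  have hinj : ∀ (σ : Equiv.Perm ((i : Fin n) × Fin (a i))) (i : Fin n),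
      Function.Injective (fun k : Fin (a i) => e (σ ⟨i, k⟩)) := by
    intro σ i x y hxy
    exact sigma_mk_injective (β := fun i' => Fin (a i'))
      (σ.injective (e.injective hxy))
  refine ⟨w, fun σ i => Finset.univ.image fun k : Fin (a i) => e (σ ⟨i, k⟩),
    hw0, hw1, ?_, ?_⟩
  · intro σ
    refine ⟨?_, ?_, ?_⟩
    · intro i i' hne'
      rw [Finset.disjoint_left]
      intro j hj hj'
      rw [hJmem] at hj hj'
      exact hne' (hj.symm.trans hj')
    · intro j
      exact ⟨(σ.symm (e.symm j)).1, (hJmem σ _ j).2 rfl⟩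
    · intro i
      rw [Finset.card_image_of_injective _ (hinj σ i), Finset.card_univ, Fintype.card_fin]
  · intro i j
    have h1 : ∑ k : Fin (a i), M ⟨i, k⟩ (e.symm j) = t j i := by
      have hconst : ∀ k : Fin (a i), M ⟨i, k⟩ (e.symm j) = t j i / (a i : ℝ) := by
        intro k
        simp only [hMdef]
        rw [e.apply_symm_apply]
      rw [Finset.sum_congr rfl fun k _ => hconst k, Finset.sum_const, Finset.card_univ,
        Fintype.card_fin]
      rcases Nat.eq_zero_or_pos (a i) with h | h
      · simp [h, hTzero i h j]
      · have hne : ((a i : ℕ) : ℝ) ≠ 0 := Nat.cast_ne_zero.2 h.ne'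
        rw [nsmul_eq_mul, mul_comm, div_mul_cancel₀ _ hne]
    calc t j i = ∑ k : Fin (a i), M ⟨i, k⟩ (e.symm j) := h1.symm
      _ = ∑ k : Fin (a i), ∑ σ, w σ * (if σ ⟨i, k⟩ = e.symm j then 1 else 0) :=
          Finset.sum_congr rfl fun k _ => hMentry _ _
      _ = ∑ σ, ∑ k : Fin (a i), w σ * (if σ ⟨i, k⟩ = e.symm j then 1 else 0) :=
          Finset.sum_comm
      _ = ∑ σ, w σ * (if j ∈ Finset.univ.image fun k : Fin (a i) => e (σ ⟨i, k⟩)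
            then 1 else 0) := by
          refine Finset.sum_congr rfl fun σ _ => ?_
          rw [← Finset.mul_sum]
          congr 1
          calc ∑ k : Fin (a i), (if σ ⟨i, k⟩ = e.symm j then (1:ℝ) else 0)
              = ∑ k : Fin (a i), (if e (σ ⟨i, k⟩) = j then (1:ℝ) else 0) := by
                simp only [Equiv.eq_symm_apply]
            _ = ∑ j' ∈ Finset.univ.image (fun k : Fin (a i) => e (σ ⟨i, k⟩)),
                  (if j' = j then (1:ℝ) else 0) :=
                (Finset.sum_image (f := fun j' => if j' = j then (1:ℝ) else 0)
                  fun x _ y _ hxy => hinj σ i hxy).symm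
            _ = _ := Finset.sum_ite_eq' _ _ _

/-- **Slices of Minkowski sums of prisms** (final lemma in the proof of Theorem 1.7).
If all `Δ_{i,j}` have the same support cone, then for non-negative integers
`a₁ + ⋯ + aₙ = p`, the slice of `∑ⱼ Δ_{1,j} * ⋯ * Δ_{n,j}` by the plane
`{∑ᵢ aᵢ bᵢ} × ℝ^m` equals `{∑ᵢ aᵢ bᵢ} × conv(⋃ ∑_{i, j ∈ Jᵢ} Δ_{i,j})`, the union over
ordered partitions `J₁ ⊔ ⋯ ⊔ Jₙ = {1,…,p}` with `|Jᵢ| = aᵢ`. -/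
theorem stmt12 (n' m p : ℕ)
    (Δ : Fin (n' + 1) → Fin p → Set (Fin m → ℝ))
    (hpoly : ∀ i j, IsPolyhedron (Δ i j) ∧ Convex ℝ (Δ i j) ∧ (Δ i j).Nonempty)
    (Γ : Set (Fin m → ℝ)) (hcone : ∀ i j, supportCone (Δ i j) = Γ)
    (a : Fin (n' + 1) → ℕ) (ha : ∑ i, a i = p) :
    (({(∑ i, (a i : ℝ) • simpVert n' i)} : Set (Fin n' → ℝ)) ×ˢ (Set.univ : Set (Fin m → ℝ)))
        ∩ (∑ j, prism (fun i => Δ i j))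
      = ({(∑ i, (a i : ℝ) • simpVert n' i)} : Set (Fin n' → ℝ)) ×ˢ
          convexHull ℝ (⋃ J ∈ {J : Fin (n' + 1) → Finset (Fin p) |
              (Pairwise fun i i' => Disjoint (J i) (J i')) ∧
              (∀ j₀ : Fin p, ∃ i, j₀ ∈ J i) ∧ (∀ i, (J i).card = a i)},
            ∑ i, ∑ j ∈ J i, Δ i j) := by
  classical
  ext q
  obtain ⟨x, y⟩ := q
  simp only [Set.mem_inter_iff, Set.mem_prod, Set.mem_singleton_iff, Set.mem_univ, and_true]
  constructor
  · rintro ⟨rfl, hmem⟩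
    refine ⟨rfl, ?_⟩
    rw [Set.mem_fintype_sum] at hmem
    obtain ⟨g, hg, hgsum⟩ := hmem
    have hprism : ∀ j, ∃ (t : Fin (n' + 1) → ℝ) (z : Fin (n' + 1) → (Fin m → ℝ)),
        (∀ i, 0 ≤ t i) ∧ ∑ i, t i = 1 ∧ (∀ i, z i ∈ Δ i j) ∧
          (∑ i, t i • simpVert n' i) = (g j).1 ∧ (∑ i, t i • z i) = (g j).2 :=
      fun j => (mem_prism_iff _ (fun i => (hpoly i j).2.1)
        (fun i => (hpoly i j).2.2) (g j)).1 (hg j)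
    choose t z ht0 ht1 hzmem hfst hsnd using hprism
    have hx1 : ∑ j, (g j).1 = ∑ i, (a i : ℝ) • simpVert n' i := by
      rw [← Prod.fst_sum, hgsum]
    have hy1 : ∑ j, (g j).2 = y := by rw [← Prod.snd_sum, hgsum]
    have hsucc : ∀ k : Fin n', ∑ j, t j k.succ = (a k.succ : ℝ) := by
      intro k
      have h1 : (∑ j, (g j).1) k = (a k.succ : ℝ) := by
        rw [hx1, sum_smul_simpVert_apply]
      rw [Finset.sum_apply] at h1
      calc ∑ j, t j k.succ
          = ∑ j, (g j).1 k := Finset.sum_congr rfl fun j _ => by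
            rw [← hfst j, sum_smul_simpVert_apply]
        _ = _ := h1
    have hcast : (a 0 : ℝ) + ∑ k : Fin n', (a k.succ : ℝ) = (p : ℝ) := by
      have h : ((∑ i, a i : ℕ) : ℝ) = (p : ℝ) := by rw [ha]
      push_cast at h
      rwa [Fin.sum_univ_succ] at h
    have h0row : ∑ j, t j 0 = (a 0 : ℝ) := by
      have hp : ∑ i, ∑ j, t j i = (p : ℝ) := by
        rw [Finset.sum_comm]
        simp [ht1]
      rw [Fin.sum_univ_succ] at hp
      simp only [hsucc] at hp
      linarith
    have hrow : ∀ i, ∑ j, t j i = (a i : ℝ) := Fin.cases h0row hsucc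
    obtain ⟨w, J, hw0, hw1, hJprop, hkey⟩ := transport t a ha ht0 ht1 hrow
    have hysum : y = ∑ σ, w σ • (∑ i, ∑ j ∈ J σ i, z j i) := by
      calc y = ∑ j, (g j).2 := hy1.symm
        _ = ∑ j, ∑ i, t j i • z j i :=
            Finset.sum_congr rfl fun j _ => (hsnd j).symm
        _ = ∑ j, ∑ i, ∑ σ, (w σ * (if j ∈ J σ i then 1 else 0)) • z j i := by
            refine Finset.sum_congr rfl fun j _ => Finset.sum_congr rfl fun i _ => ?_
            rw [hkey i j, Finset.sum_smul]
        _ = ∑ j, ∑ σ, ∑ i, (w σ * (if j ∈ J σ i then 1 else 0)) • z j i :=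
            Finset.sum_congr rfl fun j _ => Finset.sum_comm
        _ = ∑ σ, ∑ j, ∑ i, (w σ * (if j ∈ J σ i then 1 else 0)) • z j i :=
            Finset.sum_comm
        _ = ∑ σ, w σ • (∑ i, ∑ j ∈ J σ i, z j i) := by
            refine Finset.sum_congr rfl fun σ _ => ?_
            rw [Finset.sum_comm, Finset.smul_sum]
            refine Finset.sum_congr rfl fun i _ => ?_
            have hterm : ∀ j, (w σ * (if j ∈ J σ i then 1 else 0)) • z j i
                = if j ∈ J σ i then w σ • z j i else 0 := by
              intro j
              by_cases h : j ∈ J σ i <;> simp [h]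
            rw [Finset.sum_congr rfl fun j _ => hterm j, Finset.sum_ite_mem,
              Finset.univ_inter, Finset.smul_sum]
    rw [hysum]
    refine (convex_convexHull ℝ _).sum_mem (fun σ _ => hw0 σ) hw1 fun σ _ => ?_
    refine subset_convexHull ℝ _ (Set.mem_iUnion₂.2 ⟨J σ, hJprop σ, ?_⟩)
    exact Set.finset_sum_mem_finset_sum _ _ _ fun i _ =>
      Set.finset_sum_mem_finset_sum _ _ _ fun j hj => hzmem j i
  · rintro ⟨rfl, hy⟩
    refine ⟨rfl, ?_⟩
    set X := ∑ i, (a i : ℝ) • simpVert n' i with hXdef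
    have hSconv : Convex ℝ (∑ j, prism (fun i => Δ i j)) :=
      convex_finsetSum _ _ fun j _ => convex_convexHull ℝ _
    have hTconv : Convex ℝ {y' | (X, y') ∈ ∑ j, prism (fun i => Δ i j)} := by
      intro y₁ h₁ y₂ h₂ α β hα hβ hαβ
      have heq : α • ((X, y₁) : (Fin n' → ℝ) × (Fin m → ℝ)) + β • ((X, y₂) : _ × _)
          = (X, α • y₁ + β • y₂) := by
        rw [Prod.smul_mk, Prod.smul_mk, Prod.mk_add_mk, ← add_smul, hαβ, one_smul]
      have hS := hSconv h₁ h₂ hα hβ hαβ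
      rw [heq] at hS
      exact hS
    have hsub : (⋃ J ∈ {J : Fin (n' + 1) → Finset (Fin p) |
            (Pairwise fun i i' => Disjoint (J i) (J i')) ∧
            (∀ j₀ : Fin p, ∃ i, j₀ ∈ J i) ∧ (∀ i, (J i).card = a i)},
          ∑ i, ∑ j ∈ J i, Δ i j)
        ⊆ {y' | (X, y') ∈ ∑ j, prism (fun i => Δ i j)} := by
      intro y' hy'
      rw [Set.mem_iUnion₂] at hy'
      obtain ⟨J, ⟨hJd, hJc, hJcard⟩, hy'⟩ := hy'
      rw [Set.mem_fintype_sum] at hy'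
      obtain ⟨G, hG, hGsum⟩ := hy'
      have hzex : ∀ i, ∃ zz : Fin p → (Fin m → ℝ),
          (∀ j ∈ J i, zz j ∈ Δ i j) ∧ ∑ j ∈ J i, zz j = G i := by
        intro i
        have h := hG i
        rw [Set.mem_finset_sum] at h
        obtain ⟨zz, hzz, hzsum⟩ := h
        exact ⟨zz, fun j hj => hzz hj, hzsum⟩
      choose zz hzz hzsum using hzex
      choose ind hindmem using hJc
      have huniq : ∀ i j, j ∈ J i → ind j = i := by
        intro i j hj
        by_contra hne'
        exact Finset.disjoint_left.1 (hJd hne') (hindmem j) hj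
      have hJeq : ∀ i, J i = Finset.univ.filter fun j => ind j = i := by
        intro i
        ext j
        simp only [Finset.mem_filter, Finset.mem_univ, true_and]
        exact ⟨huniq i j, fun h => h ▸ hindmem j⟩
      have hmemP : ∀ j : Fin p,
          ((simpVert n' (ind j), zz (ind j) j) : (Fin n' → ℝ) × (Fin m → ℝ))
            ∈ prism (fun i => Δ i j) :=
        fun j => subset_convexHull ℝ _
          (Set.mem_iUnion.2 ⟨ind j, Set.mk_mem_prod rfl (hzz (ind j) j (hindmem j))⟩)
      have htotal := Set.finset_sum_mem_finset_sum Finset.univ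
        (fun j => prism (fun i => Δ i j))
        (fun j => ((simpVert n' (ind j), zz (ind j) j) : (Fin n' → ℝ) × (Fin m → ℝ)))
        (fun j _ => hmemP j)
      have hfst2 : ∑ j, simpVert n' (ind j) = X := by
        rw [hXdef]
        rw [← Finset.sum_fiberwise_of_maps_to (t := Finset.univ)
          (fun j _ => Finset.mem_univ (ind j)) (fun j => simpVert n' (ind j))]
        refine Finset.sum_congr rfl fun i _ => ?_
        calc ∑ j ∈ Finset.univ.filter fun j => ind j = i, simpVert n' (ind j)
            = ∑ j ∈ Finset.univ.filter fun j => ind j = i, simpVert n' i :=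
              Finset.sum_congr rfl fun j hj => by rw [(Finset.mem_filter.1 hj).2]
          _ = (a i) • simpVert n' i := by
              rw [Finset.sum_const, ← hJeq i, hJcard i]
          _ = (a i : ℝ) • simpVert n' i := (Nat.cast_smul_eq_nsmul ℝ _ _).symm
      have hsnd2 : ∑ j, zz (ind j) j = y' := by
        rw [← hGsum]
        rw [← Finset.sum_fiberwise_of_maps_to (t := Finset.univ)
          (fun j _ => Finset.mem_univ (ind j)) (fun j => zz (ind j) j)]
        refine Finset.sum_congr rfl fun i _ => ?_
        calc ∑ j ∈ Finset.univ.filter fun j => ind j = i, zz (ind j) j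
            = ∑ j ∈ Finset.univ.filter fun j => ind j = i, zz i j :=
              Finset.sum_congr rfl fun j hj => by rw [(Finset.mem_filter.1 hj).2]
          _ = ∑ j ∈ J i, zz i j := by rw [← hJeq i]
          _ = G i := hzsum i
      have hpair : (∑ j : Fin p,
          ((simpVert n' (ind j), zz (ind j) j) : (Fin n' → ℝ) × (Fin m → ℝ))) = (X, y') := by
        refine Prod.ext ?_ ?_
        · rw [Prod.fst_sum]
          exact hfst2
        · rw [Prod.snd_sum]
          exact hsnd2
      rw [hpair] at htotal
      exact htotal
    exact convexHull_min hsub hTconv hy
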